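/- Every T₃ (regular Hausdorff) Lindelöf space with the Rothberger property is zero-dimensional. -/

import Mathlib

open Set

/-- `𝒰` is an open cover of the space `X`. -/
def IsOpenCover {X : Type*} [TopologicalSpace X] (𝒰 : Set (Set X)) : Prop :=
  (∀ U ∈ 𝒰, IsOpen U) ∧ ⋃₀ 𝒰 = Set.univ

/-- The Rothberger property `S₁^ω(𝒪,𝒪)`. -/
def RothbergerSpace (X : Type*) [TopologicalSpace X] : Prop :=
  ∀ 𝒰 : ℕ → Set (Set X), (∀ n, IsOpenCover (𝒰 n)) →
    ∃ U : ℕ → Set X, (∀ n, U n ∈ 𝒰 n) ∧ (⋃ n, U n) = Set.univ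

open MeasureTheory in
/-- The range of a continuous real valued function on a Rothberger space is Lebesgue null. -/
lemma rothberger_range_null {X : Type*} [TopologicalSpace X] (h : RothbergerSpace X)
    (f : C(X, ℝ)) : volume (Set.range f) = 0 := by
  have key : ∀ ε : ℝ, 0 < ε → volume (Set.range f) ≤ ENNReal.ofReal ε := by
    intro ε hε
    set r : ℕ → ℝ := fun n => ε / 2 / 2 ^ n / 2 with hr
    have hrpos : ∀ n, 0 < r n := fun n => by positivity
    set 𝒰 : ℕ → Set (Set X) :=
      fun n => {V | ∃ q : ℝ, V = f ⁻¹' Metric.ball q (r n)} with h𝒰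
    have hcover : ∀ n, IsOpenCover (𝒰 n) := by
      intro n
      constructor
      · rintro V ⟨q, rfl⟩
        exact Metric.isOpen_ball.preimage f.continuous
      · refine eq_univ_iff_forall.mpr fun x => ?_
        exact ⟨f ⁻¹' Metric.ball (f x) (r n), ⟨f x, rfl⟩,
          by simp [Metric.mem_ball, hrpos n]⟩
    obtain ⟨U, hU, hUcov⟩ := h 𝒰 hcover
    choose q hq using hU
    have hsub : Set.range f ⊆ ⋃ n, Metric.ball (q n) (r n) := by
      rintro - ⟨x, rfl⟩
      have hx : x ∈ ⋃ n, U n := hUcov ▸ mem_univ x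
      obtain ⟨n, hn⟩ := mem_iUnion.mp hx
      rw [hq n] at hn
      exact mem_iUnion.mpr ⟨n, hn⟩
    calc volume (Set.range f) ≤ volume (⋃ n, Metric.ball (q n) (r n)) := measure_mono hsub
      _ ≤ ∑' n, volume (Metric.ball (q n) (r n)) := measure_iUnion_le _
      _ = ∑' n, ENNReal.ofReal (ε / 2 / 2 ^ n) := by
          refine tsum_congr fun n => ?_
          rw [Real.volume_ball]
          congr 1
          rw [hr]; ring
      _ = ENNReal.ofReal (∑' n, ε / 2 / 2 ^ n) :=
          (ENNReal.ofReal_tsum_of_nonneg (fun n => by positivity)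
            (summable_geometric_two' ε)).symm
      _ = ENNReal.ofReal ε := by rw [tsum_geometric_two' ε]
  refine le_antisymm ?_ (zero_le)
  refine ENNReal.le_of_forall_pos_le_add fun ε hε _ => ?_
  calc volume (Set.range f) ≤ ENNReal.ofReal ε := key ε hε
    _ ≤ 0 + ε := by rw [zero_add, ENNReal.ofReal_coe_nnreal]

theorem stmt10 (X : Type*) [TopologicalSpace X] [T3Space X] [LindelofSpace X]
    (h : RothbergerSpace X) :
    TopologicalSpace.IsTopologicalBasis {s : Set X | IsClopen s} := by
  refine TopologicalSpace.isTopologicalBasis_of_isOpen_of_nhds (fun s hs => hs.2) ?_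
  intro x u hxu hu
  obtain ⟨f, hf0, hf1, hf01⟩ := exists_continuous_zero_one_of_isClosed
    (isClosed_singleton (x := x)) hu.isClosed_compl
    (disjoint_left.mpr (fun a ha hb => hb ((mem_singleton_iff.mp ha) ▸ hxu)))
  -- range f is null, hence doesn't contain Ioo 0 1
  have hnull := rothberger_range_null h f
  have : ¬ Ioo (0:ℝ) 1 ⊆ Set.range f := by
    intro hsub
    have := MeasureTheory.measure_mono (μ := MeasureTheory.volume) hsub
    rw [hnull, Real.volume_Ioo] at this
    simp at this
  obtain ⟨t, ht, htf⟩ := not_subset.mp this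
  refine ⟨f ⁻¹' Iio t, ⟨?_, ?_⟩, ?_, ?_⟩
  · -- closed: preimage of Iio t = preimage of Iic t
    have : f ⁻¹' Iio t = f ⁻¹' Iic t := by
      ext y
      simp only [mem_preimage, mem_Iio, mem_Iic]
      constructor
      · exact le_of_lt
      · intro hy
        rcases lt_or_eq_of_le hy with h' | h'
        · exact h'
        · exact absurd ⟨y, h'⟩ htf
    rw [this]
    exact isClosed_Iic.preimage f.continuous
  · exact isOpen_Iio.preimage f.continuous
  · simpa [hf0 (mem_singleton x)] using ht.1
  · intro y hy
    by_contra hyu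
    have : f y = 1 := hf1 hyu
    simp only [mem_preimage, mem_Iio] at hy
    rw [this] at hy
    exact absurd (lt_trans hy ht.2) (lt_irrefl 1)
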